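/- Let A > 0, B > 0, let ρ : ℝ → [0,∞) be integrable with total mass m = ∫ ρ dx > 0, barycenter zero (∫ x ρ(x) dx = 0) and finite second moment. Set λ = 1 + 4B/A, T(x) = λ·x, and v(y) = ρ(y/λ)/λ, and let ν be the measure with density v. Then: (i) ν is the image (pushforward) of the measure ρ·dx under T, it has total mass m and barycenter zero; (ii) the pair (T, ν) solves the optimality system: A·(x − T(x)) + (2B/m)·(V′*ν)(x) = 0 for all x ∈ ℝ, where V(s) = s² so (V′*ν)(x) = ∫ 2(x−y) dν(y); and (iii) the one-dimensional Monge–Ampère equation ρ(x) = v(T(x))·T′(x) holds for almost every x. -/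

import Mathlib

open MeasureTheory

/-- the explicit one-dimensional solution of the optimality system for the
mass-dependent routing model with `p = 2` and `V(s) = s²`.  With `λ = 1 + 4B/A`,
`T(x) = λx` and `v(y) = ρ(y/λ)/λ`, the measure `ν = v·dx` is the pushforward of `ρ·dx`
under `T`, has total mass `m` and barycenter zero; the pair `(T, ν)` solves
`A(x − T(x)) + (2B/m)(V′*ν)(x) = 0` with `(V′*ν)(x) = ∫ 2(x−y) dν(y)`; and the
one-dimensional Monge–Ampère equation `ρ(x) = v(T(x))·T′(x)` holds a.e. (`T′ = λ`). -/
theorem one_dim_mass_routing_explicit_solution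
    (A B : ℝ) (hA : 0 < A) (hB : 0 < B)
    (ρ : ℝ → ℝ) (hρ0 : ∀ x, 0 ≤ ρ x) (hρint : Integrable ρ)
    (m : ℝ) (hm : m = ∫ x, ρ x) (hmpos : 0 < m)
    (hbar : ∫ x, x * ρ x = 0)
    (h2 : Integrable (fun x => x ^ 2 * ρ x))
    (lam : ℝ) (hlam : lam = 1 + 4 * B / A)
    (T : ℝ → ℝ) (hT : T = fun x => lam * x)
    (v : ℝ → ℝ) (hv : v = fun y => ρ (y / lam) / lam)
    (ν : Measure ℝ) (hν : ν = volume.withDensity (fun y => ENNReal.ofReal (v y))) :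
    (ν = Measure.map T (volume.withDensity (fun x => ENNReal.ofReal (ρ x))) ∧
      ν Set.univ = ENNReal.ofReal m ∧ ∫ y, y ∂ν = 0) ∧
    (∀ x : ℝ, A * (x - T x) + (2 * B / m) * ∫ y, 2 * (x - y) ∂ν = 0) ∧
    (∀ᵐ x ∂volume, ρ x = v (T x) * lam) := by
  have hlampos : 0 < lam := by
    rw [hlam]; positivity
  have hlam0 : lam ≠ 0 := hlampos.ne'
  have hTmeas : Measurable T := by
    rw [hT]; exact measurable_id.const_mul lam
  -- a measurable representative of ρ
  have hρae : AEMeasurable ρ volume := hρint.aemeasurable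
  set ρ' : ℝ → ℝ := hρae.mk ρ with hρ'def
  have hρ'meas : Measurable ρ' := hρae.measurable_mk
  have hρρ' : ρ =ᵐ[volume] ρ' := hρae.ae_eq_mk
  set v' : ℝ → ℝ := fun y => ρ' (y / lam) / lam with hv'def
  -- quasi measure preserving of y ↦ y / lam
  have hdiv_meas : Measurable fun y : ℝ => y / lam := measurable_id.div_const lam
  have hmapdiv : Measure.map (fun y : ℝ => y / lam) volume
      = ENNReal.ofReal |(lam⁻¹)⁻¹| • volume := by
    have : (fun y : ℝ => y / lam) = fun y : ℝ => lam⁻¹ * y := by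
      funext y; rw [div_eq_inv_mul]
    rw [this]; exact Real.map_volume_mul_left (inv_ne_zero hlam0)
  have hqmp : Measure.QuasiMeasurePreserving (fun y : ℝ => y / lam) volume volume := by
    refine ⟨hdiv_meas, ?_⟩
    rw [hmapdiv]
    intro s hs
    simp [hs]
  have hvv' : v =ᵐ[volume] v' := by
    have := hqmp.ae_eq_comp hρρ'
    filter_upwards [this] with y hy
    rw [hv, hv'def]
    simp only [Function.comp] at hy
    simp [hy]
  -- the measures with the measurable densities
  have hνv' : ν = volume.withDensity (fun y => ENNReal.ofReal (v' y)) := by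
    rw [hν]
    exact withDensity_congr_ae (hvv'.mono fun y hy => by simp only [hy])
  have hμρ' : volume.withDensity (fun x => ENNReal.ofReal (ρ x))
      = volume.withDensity (fun x => ENNReal.ofReal (ρ' x)) :=
    withDensity_congr_ae (hρρ'.mono fun x hx => by simp only [hx])
  have hv'emeas : Measurable fun y => ENNReal.ofReal (v' y) :=
    ((hρ'meas.comp hdiv_meas).div_const lam).ennreal_ofReal
  -- the main pushforward identity
  have hmapT : Measure.map T volume = ENNReal.ofReal |lam⁻¹| • volume := by
    rw [hT]; exact Real.map_volume_mul_left hlam0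
  have hkey : ν = Measure.map T (volume.withDensity (fun x => ENNReal.ofReal (ρ x))) := by
    rw [hνv', hμρ']
    symm
    ext s hs
    rw [Measure.map_apply hTmeas hs, withDensity_apply _ hs, withDensity_apply _ (hTmeas hs)]
    have h1 : ∫⁻ y in s, ENNReal.ofReal (v' y) ∂(Measure.map T volume)
        = ∫⁻ x in T ⁻¹' s, ENNReal.ofReal (v' (T x)) ∂volume :=
      setLIntegral_map hs hv'emeas hTmeas
    have h2' : ∫⁻ y in s, ENNReal.ofReal (v' y) ∂(Measure.map T volume)
        = ENNReal.ofReal |lam⁻¹| * ∫⁻ y in s, ENNReal.ofReal (v' y) ∂volume := by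
      rw [hmapT, Measure.restrict_smul, lintegral_smul_measure, smul_eq_mul]
    have hvT : ∀ x : ℝ, v' (T x) = ρ' x / lam := by
      intro x
      rw [hT, hv'def]
      simp only
      rw [mul_div_cancel_left₀ x hlam0]
    calc ∫⁻ x in T ⁻¹' s, ENNReal.ofReal (ρ' x) ∂volume
        = ∫⁻ x in T ⁻¹' s, ENNReal.ofReal lam * ENNReal.ofReal (ρ' x / lam) ∂volume := by
          apply lintegral_congr
          intro x
          rw [← ENNReal.ofReal_mul hlampos.le, mul_div_cancel₀ _ hlam0]
      _ = ENNReal.ofReal lam * ∫⁻ x in T ⁻¹' s, ENNReal.ofReal (ρ' x / lam) ∂volume := by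
          rw [lintegral_const_mul _ ((hρ'meas.div_const lam).ennreal_ofReal)]
      _ = ENNReal.ofReal lam * ∫⁻ x in T ⁻¹' s, ENNReal.ofReal (v' (T x)) ∂volume := by
          congr 1
          apply lintegral_congr
          intro x
          rw [hvT x]
      _ = ENNReal.ofReal lam * (ENNReal.ofReal |lam⁻¹|
            * ∫⁻ y in s, ENNReal.ofReal (v' y) ∂volume) := by rw [← h1, h2']
      _ = ∫⁻ y in s, ENNReal.ofReal (v' y) ∂volume := by
          rw [← mul_assoc, abs_of_pos (inv_pos.mpr hlampos),
            ← ENNReal.ofReal_mul hlampos.le, mul_inv_cancel₀ hlam0]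
          simp
  -- integrals against the source density
  have hxρ : Integrable (fun x : ℝ => x * ρ x) := by
    refine (hρint.add h2).mono' (aestronglyMeasurable_id.mul hρint.1) ?_
    filter_upwards with x
    have hx : |x| ≤ 1 + x ^ 2 := by nlinarith [sq_nonneg (|x| - 1), sq_abs x]
    have : ‖x * ρ x‖ = |x| * ρ x := by
      rw [Real.norm_eq_abs, abs_mul, abs_of_nonneg (hρ0 x)]
    rw [this]
    calc |x| * ρ x ≤ (1 + x ^ 2) * ρ x := by
          exact mul_le_mul_of_nonneg_right hx (hρ0 x)
      _ = ρ x + x ^ 2 * ρ x := by ring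
  have htoNN : AEMeasurable (fun x => Real.toNNReal (ρ x)) volume :=
    measurable_real_toNNReal.comp_aemeasurable hρae
  have hint_with : ∀ g : ℝ → ℝ,
      ∫ t, g t ∂(volume.withDensity (fun x => ENNReal.ofReal (ρ x)))
        = ∫ t, ρ t * g t := by
    intro g
    have : (fun x => ENNReal.ofReal (ρ x))
        = fun x => (((ρ x).toNNReal : NNReal) : ENNReal) := rfl
    rw [this, integral_withDensity_eq_integral_smul₀ htoNN g]
    apply integral_congr_ae
    filter_upwards with t
    simp [NNReal.smul_def, Real.coe_toNNReal _ (hρ0 t)]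
  have hint_map : ∀ g : ℝ → ℝ, Continuous g →
      ∫ y, g y ∂ν = ∫ t, ρ t * g (lam * t) := by
    intro g hg
    rw [hkey, integral_map hTmeas.aemeasurable hg.aestronglyMeasurable]
    rw [hint_with (fun t => g (T t))]
    apply integral_congr_ae
    filter_upwards with t
    rw [hT]
  constructor
  · refine ⟨hkey, ?_, ?_⟩
    · -- total mass
      rw [hkey, Measure.map_apply hTmeas MeasurableSet.univ, Set.preimage_univ,
        withDensity_apply _ MeasurableSet.univ, Measure.restrict_univ,
        ← ofReal_integral_eq_lintegral_ofReal hρint (Filter.Eventually.of_forall hρ0), hm]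
    · -- barycenter
      have := hint_map (fun y => y) continuous_id
      rw [this]
      have heq : (fun t : ℝ => ρ t * (lam * t)) = fun t => lam * (t * ρ t) := by
        funext t; ring
      rw [heq, integral_const_mul, hbar, mul_zero]
  constructor
  · -- the optimality equation
    intro x
    have hcont : Continuous fun y : ℝ => 2 * (x - y) := by continuity
    rw [hint_map _ hcont]
    have heq : (fun t : ℝ => ρ t * (2 * (x - lam * t)))
        = fun t => (2 * x) * ρ t + (-(2 * lam)) * (t * ρ t) := by
      funext t; ring
    rw [heq, integral_add ((hρint.const_mul _)) (hxρ.const_mul _),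
      integral_const_mul, integral_const_mul, hbar, ← hm]
    rw [hT, hlam]
    field_simp
    ring
  · -- Monge–Ampère
    filter_upwards with x
    rw [hT, hv]
    simp only
    rw [mul_div_cancel_left₀ x hlam0, div_mul_cancel₀ _ hlam0]
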